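/- Let K be a field of characteristic 2 and let f be a polynomial in one variable over K whose degree d satisfies d ≥ 3 and d is not a power of 2. Then the quotient polynomial P_f(x,y,z) = (f(x)+f(y)+f(z)+f(x+y+z))/((x+y)(x+z)(y+z)) has total degree exactly d − 3. -/

import Mathlib

open MvPolynomial

section Aux

variable {σ : Type*} {R : Type*}

lemma aux_top_hc_ne_zero [CommSemiring R] {p : MvPolynomial σ R} (hp : p ≠ 0) :
    homogeneousComponent p.totalDegree p ≠ 0 := by
  obtain ⟨b, hb, hbe⟩ := Finset.exists_mem_eq_sup p.support
    (MvPolynomial.support_nonempty.mpr hp) (fun s : σ →₀ ℕ => s.sum fun _ e => e)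
  intro h
  have hc := coeff_homogeneousComponent (φ := p) p.totalDegree b
  rw [h, coeff_zero, if_pos] at hc
  · exact MvPolynomial.mem_support_iff.mp hb hc.symm
  · rw [MvPolynomial.totalDegree, hbe]
    simp [Finsupp.degree, Finsupp.sum]
    rfl

lemma aux_td_lt {a : ℕ} [CommRing R] {p : MvPolynomial σ R}
    (hle : p.totalDegree ≤ a) (hz : homogeneousComponent a p = 0) (hp : p ≠ 0) :
    p.totalDegree < a := by
  rcases lt_or_eq_of_le hle with h | h
  · exact h
  · exact absurd (h ▸ hz) (aux_top_hc_ne_zero hp)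

lemma aux_totalDegree_mul_eq [CommRing R] [IsDomain R] {p q : MvPolynomial σ R}
    (hp : p ≠ 0) (hq : q ≠ 0) :
    (p * q).totalDegree = p.totalDegree + q.totalDegree := by
  classical
  set a := p.totalDegree with ha
  set b := q.totalDegree with hb
  refine le_antisymm (totalDegree_mul p q) ?_
  set φ := homogeneousComponent a p with hφdef
  set ψ := homogeneousComponent b q with hψdef
  have hφ : φ ≠ 0 := aux_top_hc_ne_zero hp
  have hψ : ψ ≠ 0 := aux_top_hc_ne_zero hq
  have hφh : φ.IsHomogeneous a := homogeneousComponent_isHomogeneous a p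
  have hψh : ψ.IsHomogeneous b := homogeneousComponent_isHomogeneous b q
  have hcφ : homogeneousComponent a φ = φ := by
    rw [homogeneousComponent_of_mem ((mem_homogeneousSubmodule _ _).mpr hφh), if_pos rfl]
  have hcψ : homogeneousComponent b ψ = ψ := by
    rw [homogeneousComponent_of_mem ((mem_homogeneousSubmodule _ _).mpr hψh), if_pos rfl]
  have hp' : p - φ = 0 ∨ (p - φ).totalDegree < a := by
    by_cases h0 : p - φ = 0
    · exact Or.inl h0
    · refine Or.inr (aux_td_lt ?_ ?_ h0)
      · exact (totalDegree_sub p φ).trans (max_le le_rfl hφh.totalDegree_le)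
      · rw [map_sub, hcφ, hφdef, sub_self]
  have hq' : q - ψ = 0 ∨ (q - ψ).totalDegree < b := by
    by_cases h0 : q - ψ = 0
    · exact Or.inl h0
    · refine Or.inr (aux_td_lt ?_ ?_ h0)
      · exact (totalDegree_sub q ψ).trans (max_le le_rfl hψh.totalDegree_le)
      · rw [map_sub, hcψ, hψdef, sub_self]
  have hdecomp : p * q = φ * ψ + (φ * (q - ψ) + (p - φ) * q) := by ring
  have hz1 : homogeneousComponent (a + b) (φ * (q - ψ)) = 0 := by
    rcases hq' with h0 | hlt
    · rw [h0, mul_zero, map_zero]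
    · refine homogeneousComponent_eq_zero _ _ ?_
      calc (φ * (q - ψ)).totalDegree ≤ φ.totalDegree + (q - ψ).totalDegree := totalDegree_mul _ _
        _ ≤ a + (q - ψ).totalDegree := by gcongr; exact hφh.totalDegree_le
        _ < a + b := by omega
  have hz2 : homogeneousComponent (a + b) ((p - φ) * q) = 0 := by
    rcases hp' with h0 | hlt
    · rw [h0, zero_mul, map_zero]
    · refine homogeneousComponent_eq_zero _ _ ?_
      calc ((p - φ) * q).totalDegree ≤ (p - φ).totalDegree + q.totalDegree := totalDegree_mul _ _
        _ < a + b := by omega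
  have hkey : homogeneousComponent (a + b) (p * q) = φ * ψ := by
    rw [hdecomp, map_add, map_add, hz1, hz2, add_zero, add_zero,
      homogeneousComponent_of_mem ((mem_homogeneousSubmodule _ _).mpr (hφh.mul hψh)),
      if_pos rfl]
  by_contra hlt
  push_neg at hlt
  exact mul_ne_zero hφ hψ (hkey ▸ homogeneousComponent_eq_zero _ _ hlt)

lemma aux_totalDegree_aeval_le [CommSemiring R] (g : MvPolynomial σ R) (hg : g.totalDegree ≤ 1)
    (p : Polynomial R) : (Polynomial.aeval g p).totalDegree ≤ p.natDegree := by
  rw [Polynomial.aeval_eq_sum_range]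
  refine (totalDegree_finset_sum _ _).trans (Finset.sup_le fun i hi => ?_)
  rw [Finset.mem_range] at hi
  calc (p.coeff i • g ^ i).totalDegree ≤ (g ^ i).totalDegree := by
        rw [smul_eq_C_mul]
        exact (totalDegree_mul _ _).trans (by simp)
    _ ≤ i * g.totalDegree := totalDegree_pow _ _
    _ ≤ i * 1 := Nat.mul_le_mul_left _ hg
    _ ≤ p.natDegree := by omega

end Aux

/-- For a field `K` of characteristic 2 and a univariate polynomial `f` over `K`
of degree `d ≥ 3` not a power of 2, the quotient polynomial
`P_f = (f(x)+f(y)+f(z)+f(x+y+z))/((x+y)(x+z)(y+z))` has total degree exactly `d - 3`. -/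
theorem stmt_4 {K : Type*} [Field K] [CharP K 2] (f : Polynomial K)
    (hd3 : 3 ≤ f.natDegree) (hd2 : ¬∃ k : ℕ, f.natDegree = 2 ^ k)
    (P : MvPolynomial (Fin 3) K)
    (hP : ((X 0 + X 1) * (X 0 + X 2) * (X 1 + X 2) : MvPolynomial (Fin 3) K) * P =
      Polynomial.aeval (X 0 : MvPolynomial (Fin 3) K) f +
        Polynomial.aeval (X 1 : MvPolynomial (Fin 3) K) f +
        Polynomial.aeval (X 2 : MvPolynomial (Fin 3) K) f +
        Polynomial.aeval (X 0 + X 1 + X 2 : MvPolynomial (Fin 3) K) f) :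
    P.totalDegree = f.natDegree - 3 := by
  classical
  have hf0 : f ≠ 0 := fun h => by simp [h] at hd3
  set d := f.natDegree with hdd
  -- the evaluation map X0 ↦ X, X1 ↦ 1, X2 ↦ 0
  set Φ : MvPolynomial (Fin 3) K →ₐ[K] Polynomial K :=
    MvPolynomial.aeval ![Polynomial.X, 1, 0] with hΦ
  have hΦ0 : Φ (X 0) = Polynomial.X := by simp [hΦ]
  have hΦ1 : Φ (X 1) = 1 := by simp [hΦ]
  have hΦ2 : Φ (X 2) = 0 := by simp [hΦ]
  -- factor d = 2^k * e with e odd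
  obtain ⟨k, e, he2, hde⟩ := Nat.exists_eq_pow_mul_and_not_dvd
    (n := d) (by omega) 2 (by norm_num)
  have he1 : e ≠ 1 := by
    rintro rfl
    exact hd2 ⟨k, by simpa using hde⟩
  have he0 : e ≠ 0 := by rintro rfl; omega
  have he3 : 3 ≤ e := by
    rcases Nat.lt_or_ge e 3 with h | h
    · interval_cases e <;> simp_all <;> omega
    · exact h
  -- the homogeneous degree-d part generator
  set h : MvPolynomial (Fin 3) K :=
    X 0 ^ d + X 1 ^ d + X 2 ^ d + (X 0 + X 1 + X 2) ^ d with hh_def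
  have hh_hom : h.IsHomogeneous d := by
    have h1 : ((X 0 + X 1 + X 2 : MvPolynomial (Fin 3) K)).IsHomogeneous 1 :=
      ((isHomogeneous_X _ 0).add (isHomogeneous_X _ 1)).add (isHomogeneous_X _ 2)
    have := fun (i : Fin 3) => (isHomogeneous_X K i).pow d
    simpa [hh_def, one_mul] using
      ((((isHomogeneous_X K 0).pow d).add ((isHomogeneous_X K 1).pow d)).add
        ((isHomogeneous_X K 2).pow d)).add (h1.pow d)
  -- h is nonzero: evaluate via Φ and use Frobenius
  have hu : (Polynomial.X ^ e + 1 + (Polynomial.X + 1) ^ e : Polynomial K) ≠ 0 := by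
    intro hu0
    have hc := congrArg (Polynomial.coeff · (e - 1)) hu0
    simp only [Polynomial.coeff_add, Polynomial.coeff_X_pow, Polynomial.coeff_one,
      Polynomial.coeff_X_add_one_pow, Polynomial.coeff_zero] at hc
    rw [if_neg (by omega), if_neg (by omega)] at hc
    have hch : e.choose (e - 1) = e := by
      rw [← Nat.choose_symm (by omega), show e - (e - 1) = 1 by omega, Nat.choose_one_right]
    rw [hch] at hc
    simp only [zero_add] at hc
    exact (fun h2 => he2 h2) ((CharP.cast_eq_zero_iff K 2 e).mp hc)
  have hΦh : Φ h = Polynomial.X ^ d + 1 + (Polynomial.X + 1) ^ d := by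
    have : (1 : Polynomial K) ^ d = 1 := one_pow d
    simp only [hh_def, map_add, map_pow, hΦ0, hΦ1, hΦ2]
    rw [zero_pow (by omega), one_pow]
    ring
  have hfrob : (Polynomial.X ^ d + 1 + (Polynomial.X + 1) ^ d : Polynomial K) =
      (Polynomial.X ^ e + 1 + (Polynomial.X + 1) ^ e) ^ 2 ^ k := by
    rw [add_pow_char_pow, add_pow_char_pow, ← pow_mul, ← pow_mul, one_pow,
      Nat.mul_comm e (2 ^ k), ← hde]
  have hh0 : h ≠ 0 := by
    intro h0
    have : Φ h = 0 := by rw [h0, map_zero]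
    rw [hΦh, hfrob] at this
    exact hu (pow_eq_zero_iff (by positivity) |>.mp this)
  -- decompose RHS
  set a : K := f.leadingCoeff with ha
  have ha0 : a ≠ 0 := Polynomial.leadingCoeff_ne_zero.mpr hf0
  have hsplit : ∀ g : MvPolynomial (Fin 3) K,
      Polynomial.aeval g f = Polynomial.aeval g f.eraseLead + C a * g ^ d := by
    intro g
    conv_lhs => rw [← f.eraseLead_add_C_mul_X_pow]
    rw [map_add, map_mul, map_pow, Polynomial.aeval_C, Polynomial.aeval_X,
      MvPolynomial.algebraMap_eq]
  set fe := f.eraseLead with hfe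
  have hfeD : fe.natDegree ≤ d - 1 := Polynomial.eraseLead_natDegree_le f
  set E : MvPolynomial (Fin 3) K :=
    Polynomial.aeval (X 0) fe + Polynomial.aeval (X 1) fe + Polynomial.aeval (X 2) fe +
      Polynomial.aeval (X 0 + X 1 + X 2) fe with hE_def
  have hRHS : (Polynomial.aeval (X 0 : MvPolynomial (Fin 3) K) f +
        Polynomial.aeval (X 1 : MvPolynomial (Fin 3) K) f +
        Polynomial.aeval (X 2 : MvPolynomial (Fin 3) K) f +
        Polynomial.aeval (X 0 + X 1 + X 2 : MvPolynomial (Fin 3) K) f) = C a * h + E := by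
    rw [hsplit (X 0), hsplit (X 1), hsplit (X 2), hsplit (X 0 + X 1 + X 2), hh_def, hE_def]
    ring
  -- total degree bounds
  have htd1 : ∀ i : Fin 3, (X i : MvPolynomial (Fin 3) K).totalDegree ≤ 1 :=
    fun i => le_of_eq (totalDegree_X i)
  have htdS : (X 0 + X 1 + X 2 : MvPolynomial (Fin 3) K).totalDegree ≤ 1 :=
    (((isHomogeneous_X K 0).add (isHomogeneous_X K 1)).add (isHomogeneous_X K 2)).totalDegree_le
  have hEd : E.totalDegree < d := by
    have b0 := aux_totalDegree_aeval_le (X 0 : MvPolynomial (Fin 3) K) (htd1 0) fe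
    have b1 := aux_totalDegree_aeval_le (X 1 : MvPolynomial (Fin 3) K) (htd1 1) fe
    have b2 := aux_totalDegree_aeval_le (X 2 : MvPolynomial (Fin 3) K) (htd1 2) fe
    have b3 := aux_totalDegree_aeval_le (X 0 + X 1 + X 2 : MvPolynomial (Fin 3) K) htdS fe
    have hsum : E.totalDegree ≤ d - 1 := by
      rw [hE_def]
      exact (totalDegree_add _ _).trans (max_le ((totalDegree_add _ _).trans
        (max_le ((totalDegree_add _ _).trans (max_le (b0.trans hfeD) (b1.trans hfeD))) (b2.trans hfeD))) (b3.trans hfeD))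
    omega
  have hCah : (C a * h : MvPolynomial (Fin 3) K).IsHomogeneous d := by
    simpa using (isHomogeneous_C _ a).mul hh_hom
  have hCah0 : (C a * h : MvPolynomial (Fin 3) K) ≠ 0 :=
    mul_ne_zero (fun hc => ha0 (by simpa using congrArg (coeff 0) hc)) hh0
  have hCahd : (C a * h : MvPolynomial (Fin 3) K).totalDegree = d := hCah.totalDegree hCah0
  have hRHSd : (C a * h + E : MvPolynomial (Fin 3) K).totalDegree = d := by
    rw [totalDegree_add_eq_left_of_totalDegree_lt (by omega), hCahd]
  -- the cubic factors are nonzero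
  have hΦne : ∀ g : MvPolynomial (Fin 3) K, Φ g ≠ 0 → g ≠ 0 :=
    fun g hg h0 => hg (by rw [h0, map_zero])
  have hx01 : (X 0 + X 1 : MvPolynomial (Fin 3) K) ≠ 0 := by
    refine hΦne _ ?_
    rw [map_add, hΦ0, hΦ1]
    intro h0
    simpa [Polynomial.coeff_one] using congrArg (Polynomial.coeff · 1) h0
  have hx02 : (X 0 + X 2 : MvPolynomial (Fin 3) K) ≠ 0 := by
    refine hΦne _ ?_
    rw [map_add, hΦ0, hΦ2, add_zero]
    exact Polynomial.X_ne_zero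
  have hx12 : (X 1 + X 2 : MvPolynomial (Fin 3) K) ≠ 0 := by
    refine hΦne _ ?_
    rw [map_add, hΦ1, hΦ2, add_zero]
    exact one_ne_zero
  have h01h : (X 0 + X 1 : MvPolynomial (Fin 3) K).IsHomogeneous 1 :=
    (isHomogeneous_X K 0).add (isHomogeneous_X K 1)
  have h02h : (X 0 + X 2 : MvPolynomial (Fin 3) K).IsHomogeneous 1 :=
    (isHomogeneous_X K 0).add (isHomogeneous_X K 2)
  have h12h : (X 1 + X 2 : MvPolynomial (Fin 3) K).IsHomogeneous 1 :=
    (isHomogeneous_X K 1).add (isHomogeneous_X K 2)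
  set Q : MvPolynomial (Fin 3) K := (X 0 + X 1) * (X 0 + X 2) * (X 1 + X 2) with hQdef
  have hQ0 : Q ≠ 0 := mul_ne_zero (mul_ne_zero hx01 hx02) hx12
  have hQd : Q.totalDegree = 3 := by
    rw [hQdef, aux_totalDegree_mul_eq (mul_ne_zero hx01 hx02) hx12,
      aux_totalDegree_mul_eq hx01 hx02, h01h.totalDegree hx01, h02h.totalDegree hx02,
      h12h.totalDegree hx12]
  have hP0 : P ≠ 0 := by
    rintro rfl
    rw [mul_zero] at hP
    have : (0 : MvPolynomial (Fin 3) K).totalDegree = d := by rw [hP, hRHS, hRHSd]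
    rw [totalDegree_zero] at this
    omega
  have hfinal := aux_totalDegree_mul_eq hQ0 hP0
  rw [hP, hRHS, hRHSd, hQd] at hfinal
  omega
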